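/- Let c = 1/√2, d ∈ [√2/2, 2(√2-1)], a(n) = ⌊cn + d⌋, and f(n) = a(n) + a(n-1). Then for every n ≥ 2, a(f(n)) ∈ {n, n+1}; moreover if {cn + d} ≥ 1 - c (so that a(n+1) = a(n) + 1), then a(f(n)) = n. -/

import Mathlib

open Real

theorem stmt12 (c d : ℝ) (hc : c = 1 / Real.sqrt 2)
    (hd : d ∈ Set.Icc (Real.sqrt 2 / 2) (2 * (Real.sqrt 2 - 1)))
    (a : ℤ → ℤ) (ha : ∀ n : ℤ, a n = ⌊c * n + d⌋)
    (f : ℤ → ℤ) (hf : ∀ n : ℤ, f n = a n + a (n - 1)) :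
    ∀ n : ℤ, 2 ≤ n →
      (a (f n) = n ∨ a (f n) = n + 1) ∧
      (1 - c ≤ Int.fract (c * n + d) → a (f n) = n) := by
  obtain ⟨hd1, hd2⟩ := hd
  have hs0 : (0:ℝ) < Real.sqrt 2 := Real.sqrt_pos.mpr (by norm_num)
  have hss : Real.sqrt 2 * Real.sqrt 2 = 2 := Real.mul_self_sqrt (by norm_num)
  have hcpos : 0 < c := by rw [hc]; positivity
  have h2c : 2 * (c * c) = 1 := by
    rw [hc]; field_simp; rw [Real.sq_sqrt (by norm_num)]
  have hclt : c < 1 := by nlinarith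
  have hcgt : (2:ℝ)/3 < c := by nlinarith
  have hdc : c ≤ d := by
    have h : Real.sqrt 2 / 2 = c := by
      rw [hc, div_eq_div_iff (by norm_num : (2:ℝ) ≠ 0) hs0.ne']
      linarith
    linarith
  have hdu : c * d ≤ 2 - 2 * c := by
    have h1 : c * Real.sqrt 2 = 1 := by rw [hc]; field_simp
    nlinarith [mul_le_mul_of_nonneg_left hd2 hcpos.le]
  have hd4 : d ≤ 4 * c - 2 := by nlinarith
  intro n hn
  set θ := Int.fract (c * n + d) with hθdef
  have hθ0 : 0 ≤ θ := Int.fract_nonneg _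
  have hθ1 : θ < 1 := Int.fract_lt_one _
  have hA : ((a n : ℤ) : ℝ) = c * n + d - θ := by
    rw [ha n, hθdef]; exact (Int.self_sub_fract _).symm
  have keyn : ∀ m : ℤ, (m : ℝ) ≤ c * (f n) + d → c * (f n) + d < (m : ℝ) + 1 → a (f n) = m := by
    intro m h1 h2
    rw [ha (f n)]
    exact Int.floor_eq_iff.mpr ⟨h1, by linarith⟩
  rcases lt_or_ge θ c with hlt | hge
  · have han1 : a (n - 1) = a n - 1 := by
      rw [ha (n-1)]
      apply Int.floor_eq_iff.mpr
      constructor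
      · push_cast; linarith
      · push_cast; linarith
    have hfn : (f n : ℝ) = 2 * (a n : ℝ) - 1 := by
      rw [hf n, han1]; push_cast; ring
    have hkey : c * (f n : ℝ) + d = n + ((2*c+1)*d - 2*c*θ - c) := by
      rw [hfn]
      linear_combination 2*c*hA + (n:ℝ)*h2c
    have hg0 : 0 < (2*c+1)*d - 2*c*θ - c := by
      have h1 := mul_pos hcpos (show (0:ℝ) < d - θ by linarith)
      linarith
    have hg2 : (2*c+1)*d - 2*c*θ - c < 2 := by
      have h1 : 0 ≤ c * θ := mul_nonneg hcpos.le hθ0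
      linarith
    have hsmall : 1 - c ≤ θ → (2*c+1)*d - 2*c*θ - c < 1 := by
      intro h1c
      have h1 := mul_le_mul_of_nonneg_left h1c hcpos.le
      linarith
    rcases lt_or_ge ((2*c+1)*d - 2*c*θ - c) 1 with hg1 | hg1
    · have heq : a (f n) = n := keyn n (by rw [hkey]; linarith) (by rw [hkey]; linarith)
      exact ⟨Or.inl heq, fun _ => heq⟩
    · have heq : a (f n) = n + 1 :=
        keyn (n+1) (by rw [hkey]; push_cast; linarith) (by rw [hkey]; push_cast; linarith)
      exact ⟨Or.inr heq, fun h1c => absurd (hsmall h1c) (by linarith)⟩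
  · have han1 : a (n - 1) = a n := by
      rw [ha (n-1)]
      apply Int.floor_eq_iff.mpr
      constructor
      · push_cast; linarith
      · push_cast; linarith
    have hfn : (f n : ℝ) = 2 * (a n : ℝ) := by
      rw [hf n, han1]; push_cast; ring
    have hkey : c * (f n : ℝ) + d = n + ((2*c+1)*d - 2*c*θ) := by
      rw [hfn]
      linear_combination 2*c*hA + (n:ℝ)*h2c
    have hg0 : 0 < (2*c+1)*d - 2*c*θ := by
      have h1 := mul_le_mul_of_nonneg_left hdc hcpos.le
      have h2 := mul_lt_mul_of_pos_left hθ1 hcpos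
      linarith
    have hg1 : (2*c+1)*d - 2*c*θ ≤ 1 := by
      have h1 := mul_le_mul_of_nonneg_left hge hcpos.le
      linarith
    have hglt : (2*c+1)*d - 2*c*θ < 1 := by
      by_contra hcon
      push_neg at hcon
      have hcg : c * ((2*c+1)*d - 2*c*θ) = d + c*d - θ := by
        linear_combination (d - θ) * h2c
      have hcg2 : c * 1 ≤ c * ((2*c+1)*d - 2*c*θ) :=
        mul_le_mul_of_nonneg_left hcon hcpos.le
      have hθc : θ = c := by linarith
      have hdeq : d = 4*c - 2 := by linarith
      have hc3 : c * ((n:ℝ) + 3) = (a n : ℝ) + 2 := by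
        linear_combination -hA + hθc - hdeq
      have hnr : (2:ℝ) ≤ (n:ℝ) := by exact_mod_cast hn
      have hpos : (0:ℝ) < (a n : ℝ) + 2 := by
        have := mul_pos hcpos (show (0:ℝ) < (n:ℝ) + 3 by linarith)
        linarith
      have h2 : Real.sqrt 2 * ((a n : ℝ) + 2) = (n:ℝ) + 3 := by
        rw [hc] at hc3
        field_simp at hc3
        linarith
      have hq : ((((n+3 : ℤ) : ℚ) / ((a n + 2 : ℤ) : ℚ) : ℚ) : ℝ) = Real.sqrt 2 := by
        push_cast
        rw [div_eq_iff hpos.ne']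
        linarith
      exact irrational_sqrt_two ⟨_, hq⟩
    have heq : a (f n) = n := keyn n (by rw [hkey]; linarith) (by rw [hkey]; linarith)
    exact ⟨Or.inl heq, fun _ => heq⟩
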